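/- arXiv:1410.3234 — 2 statements merged into one kernel-verified Lean document; each statement's English description precedes it below -/
import Mathlib

section
/- If a vector t ∈ Θ satisfies t_s + Σ_{r≠s} t_{s,r} x_r = 0 for every site s ∈ S and every binary vector x ∈ B, then t = 0. Equivalently, if ⟨A(s,x), t⟩ = 0 for all s ∈ S and all x ∈ B, then t = 0. -/
open scoped BigOperators RealInnerProductSpace Classical
open Finset

/-- Binary vectors of length `L`. -/
abbrev BinVec (L : ℕ) := Fin L → Bool

/-- Real value (0 or 1) of the `s`-th coordinate of a binary vector. -/
def bval {L : ℕ} (x : BinVec L) (s : Fin L) : ℝ := if x s then 1 else 0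

/-- Index set for the parameter space: pairs `s ≤ t`; the diagonal `(s,s)` codes `θ_s`,
off-diagonal `(s,t)` with `s < t` codes `θ_{s,t}`.  Cardinality `L(L+1)/2`. -/
abbrev Idx (L : ℕ) := {p : Fin L × Fin L // p.1 ≤ p.2}

/-- The parameter space `Θ`, with its Euclidean norm and inner product. -/
abbrev Theta (L : ℕ) := EuclideanSpace ℝ (Idx L)

/-- Symmetrized coordinate access: `coordOf θ s s = θ_s`, and `coordOf θ s t = θ_{s,t} = θ_{t,s}`. -/
def coordOf {L : ℕ} (θ : Theta L) (s t : Fin L) : ℝ :=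
  if h : s ≤ t then θ ⟨(s, t), h⟩ else θ ⟨(t, s), le_of_not_ge h⟩

/-- The statistics vector `U(x) ∈ Θ`, with `U_s(x) = x_s` and `U_{s,t}(x) = x_s x_t`. -/
noncomputable def U {L : ℕ} (x : BinVec L) : Theta L :=
  (EuclideanSpace.equiv (Idx L) ℝ).symm fun i => bval x i.1.1 * bval x i.1.2

/-- Partition function `Z(θ)`. -/
noncomputable def Zfun {L : ℕ} (θ : Theta L) : ℝ :=
  ∑ y : BinVec L, Real.exp (-⟪θ, U y⟫)

/-- The autologistic distribution `π_θ`. -/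
noncomputable def piA {L : ℕ} (θ : Theta L) (x : BinVec L) : ℝ :=
  Real.exp (-⟪θ, U x⟫) / Zfun θ

/-- `a_{s,x}(T) = −(T_s + Σ_{r≠s} T_{s,r} x_r)`. -/
noncomputable def aFun {L : ℕ} (s : Fin L) (x : BinVec L) (T : Theta L) : ℝ :=
  -(coordOf T s s + ∑ r ∈ Finset.univ.erase s, coordOf T s r * bval x r)

/-- The vector `A(s,x) ∈ Θ` with `A_s(s,x) = −1`, `A_{s,r}(s,x) = −x_r` for `r ≠ s`,
all other coordinates `0`. -/
noncomputable def Avec {L : ℕ} (s : Fin L) (x : BinVec L) : Theta L :=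
  (EuclideanSpace.equiv (Idx L) ℝ).symm fun i =>
    if i.1.1 = s ∧ i.1.2 = s then -1
    else if i.1.1 = s then -(bval x i.1.2)
    else if i.1.2 = s then -(bval x i.1.1)
    else 0

/-- `g(z) = 1/(1+e^z)`. -/
noncomputable def gfun (z : ℝ) : ℝ := 1 / (1 + Real.exp z)

/-- `h(z) = e^z/(1+e^z)`. -/
noncomputable def hfun (z : ℝ) : ℝ := Real.exp z / (1 + Real.exp z)

/-- Local log pseudo-likelihood `LPL_{s,x}(T)`. -/
noncomputable def LPLs {L : ℕ} (s : Fin L) (x : BinVec L) (T : Theta L) : ℝ :=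
  bval x s * aFun s x T + Real.log (gfun (aFun s x T))

/-- Log pseudo-likelihood `LPL(x,T) = Σ_s LPL_{s,x}(T)`. -/
noncomputable def LPL {L : ℕ} (x : BinVec L) (T : Theta L) : ℝ := ∑ s, LPLs s x T

/-- Mean log pseudo-likelihood `g_θ(T)`. -/
noncomputable def gbar {L : ℕ} (θ T : Theta L) : ℝ := ∑ x : BinVec L, piA θ x * LPL x T


/-- if `t_s + Σ_{r≠s} t_{s,r} x_r = 0` for every site `s` and every binary
vector `x`, then `t = 0`. -/
theorem stmt2 (L : ℕ) (hL : 1 ≤ L) (t : Theta L)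
    (h : ∀ (s : Fin L) (x : BinVec L),
      coordOf t s s + ∑ r ∈ Finset.univ.erase s, coordOf t s r * bval x r = 0) :
    t = 0 := by
  have hdiag : ∀ s : Fin L, coordOf t s s = 0 := by
    intro s
    have := h s (fun _ => false)
    simpa [bval] using this
  have hoff : ∀ s r : Fin L, coordOf t s r = 0 := by
    intro s r
    rcases eq_or_ne r s with rfl | hrs
    · exact hdiag r
    · have := h s (fun i => i = r)
      rw [hdiag s, zero_add] at this
      rw [Finset.sum_eq_single r] at this
      · simpa [bval] using this
      · intro b _ hb
        simp [bval, hb]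
      · intro hr
        exact absurd (Finset.mem_erase.mpr ⟨hrs, Finset.mem_univ r⟩) hr
  ext i
  obtain ⟨⟨a, b⟩, hab⟩ := i
  have := hoff a b
  rw [coordOf, dif_pos hab] at this
  simpa using this
end

section
/- For every θ ∈ Θ, the mean log pseudo-likelihood T ↦ g_θ(T) is strictly concave on Θ: for all T, T' ∈ Θ with T ≠ T' and all λ ∈ (0,1), one has g_θ(λT + (1−λ)T') > λ·g_θ(T) + (1−λ)·g_θ(T'). -/
open scoped BigOperators RealInnerProductSpace Classical
open Finset

lemma lse_deriv (z : ℝ) : HasDerivAt (fun z : ℝ => Real.log (1 + Real.exp z)) (Real.exp z / (1 + Real.exp z)) z := by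
  have h : HasDerivAt (fun z : ℝ => 1 + Real.exp z) (Real.exp z) z :=
    (Real.hasDerivAt_exp z).const_add 1
  exact h.log (by positivity)

lemma lse_strictConvex : StrictConvexOn ℝ Set.univ (fun z : ℝ => Real.log (1 + Real.exp z)) := by
  apply StrictMonoOn.strictConvexOn_of_deriv convex_univ
  · exact (continuous_const.add Real.continuous_exp).log (fun z => (add_pos one_pos (Real.exp_pos z)).ne') |>.continuousOn
  · rw [interior_univ]
    have hd : deriv (fun z : ℝ => Real.log (1 + Real.exp z)) = fun z => Real.exp z / (1 + Real.exp z) := by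
      funext z; exact (lse_deriv z).deriv
    rw [hd]
    intro a _ b _ hab
    have ha := Real.exp_pos a
    have hb := Real.exp_pos b
    simp only
    rw [div_lt_div_iff₀ (by positivity) (by positivity)]
    nlinarith [Real.exp_lt_exp.2 hab]

lemma coordOf_comb {L : ℕ} (a b : ℝ) (T T' : Theta L) (s t : Fin L) :
    coordOf (a • T + b • T') s t = a * coordOf T s t + b * coordOf T' s t := by
  unfold coordOf
  split <;> simp [PiLp.add_apply, PiLp.smul_apply, smul_eq_mul]

lemma aFun_comb {L : ℕ} (a b : ℝ) (s : Fin L) (x : BinVec L) (T T' : Theta L) :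
    aFun s x (a • T + b • T') = a * aFun s x T + b * aFun s x T' := by
  unfold aFun
  simp only [coordOf_comb, add_mul, mul_assoc]
  rw [Finset.sum_add_distrib, ← Finset.mul_sum, ← Finset.mul_sum]
  ring

lemma LPLs_eq {L : ℕ} (s : Fin L) (x : BinVec L) (T : Theta L) :
    LPLs s x T = bval x s * aFun s x T - Real.log (1 + Real.exp (aFun s x T)) := by
  unfold LPLs gfun
  rw [one_div, Real.log_inv]
  ring

/-- Pointwise concavity in the scalar `a`. -/
lemma phi_concave (c a a' lam : ℝ) (h0 : 0 < lam) (h1 : lam < 1) :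
    lam * (c * a - Real.log (1 + Real.exp a)) + (1 - lam) * (c * a' - Real.log (1 + Real.exp a'))
      ≤ c * (lam * a + (1 - lam) * a') - Real.log (1 + Real.exp (lam * a + (1 - lam) * a')) := by
  rcases eq_or_ne a a' with rfl | hne
  · have : lam * a + (1 - lam) * a = a := by ring
    rw [this]; apply le_of_eq; ring
  · have := lse_strictConvex.2 (Set.mem_univ a) (Set.mem_univ a') hne h0 (by linarith)
      (by ring : lam + (1 - lam) = 1)
    simp only [smul_eq_mul] at this
    nlinarith [this]

lemma phi_strict (c a a' lam : ℝ) (h0 : 0 < lam) (h1 : lam < 1) (hne : a ≠ a') :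
    lam * (c * a - Real.log (1 + Real.exp a)) + (1 - lam) * (c * a' - Real.log (1 + Real.exp a'))
      < c * (lam * a + (1 - lam) * a') - Real.log (1 + Real.exp (lam * a + (1 - lam) * a')) := by
  have := lse_strictConvex.2 (Set.mem_univ a) (Set.mem_univ a') hne h0 (by linarith)
    (by ring : lam + (1 - lam) = 1)
  simp only [smul_eq_mul] at this
  nlinarith [this]

lemma LPLs_le {L : ℕ} (s : Fin L) (x : BinVec L) (T T' : Theta L) (lam : ℝ)
    (h0 : 0 < lam) (h1 : lam < 1) :
    lam * LPLs s x T + (1 - lam) * LPLs s x T' ≤ LPLs s x (lam • T + (1 - lam) • T') := by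
  simp only [LPLs_eq, aFun_comb]
  exact phi_concave _ _ _ _ h0 h1

lemma LPLs_lt {L : ℕ} (s : Fin L) (x : BinVec L) (T T' : Theta L) (lam : ℝ)
    (h0 : 0 < lam) (h1 : lam < 1) (hne : aFun s x T ≠ aFun s x T') :
    lam * LPLs s x T + (1 - lam) * LPLs s x T' < LPLs s x (lam • T + (1 - lam) • T') := by
  simp only [LPLs_eq, aFun_comb]
  exact phi_strict _ _ _ _ h0 h1 hne

lemma LPL_le {L : ℕ} (x : BinVec L) (T T' : Theta L) (lam : ℝ)
    (h0 : 0 < lam) (h1 : lam < 1) :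
    lam * LPL x T + (1 - lam) * LPL x T' ≤ LPL x (lam • T + (1 - lam) • T') := by
  unfold LPL
  rw [Finset.mul_sum, Finset.mul_sum, ← Finset.sum_add_distrib]
  exact Finset.sum_le_sum fun s _ => LPLs_le s x T T' lam h0 h1

lemma LPL_lt {L : ℕ} (x : BinVec L) (T T' : Theta L) (lam : ℝ)
    (h0 : 0 < lam) (h1 : lam < 1) (s : Fin L) (hne : aFun s x T ≠ aFun s x T') :
    lam * LPL x T + (1 - lam) * LPL x T' < LPL x (lam • T + (1 - lam) • T') := by
  unfold LPL
  rw [Finset.mul_sum, Finset.mul_sum, ← Finset.sum_add_distrib]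
  exact Finset.sum_lt_sum (fun s _ => LPLs_le s x T T' lam h0 h1)
    ⟨s, Finset.mem_univ s, LPLs_lt s x T T' lam h0 h1 hne⟩

lemma piA_pos {L : ℕ} (θ : Theta L) (x : BinVec L) : 0 < piA θ x := by
  unfold piA Zfun
  apply div_pos (Real.exp_pos _)
  exact Finset.sum_pos (fun y _ => Real.exp_pos _) ⟨x, Finset.mem_univ x⟩

/-- Injectivity: if all `aFun` values agree then the parameters agree. -/
lemma aFun_inj {L : ℕ} (T T' : Theta L)
    (h : ∀ (s : Fin L) (x : BinVec L), aFun s x T = aFun s x T') : T = T' := by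
  have hdiag : ∀ s : Fin L, coordOf T s s = coordOf T' s s := by
    intro s
    have := h s (fun _ => false)
    unfold aFun at this
    simp [bval] at this
    exact this
  have hoff : ∀ s t : Fin L, coordOf T s t = coordOf T' s t := by
    intro s t
    rcases eq_or_ne s t with rfl | hst
    · exact hdiag s
    · have := h s (fun r => r = t)
      unfold aFun at this
      have hsum : ∀ (W : Theta L), ∑ r ∈ Finset.univ.erase s, coordOf W s r * bval (fun r => (r = t : Bool)) r = coordOf W s t := by
        intro W
        rw [Finset.sum_eq_single t]
        · simp [bval]
        · intro r _ hrt; simp [bval, hrt]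
        · intro hmem
          exact absurd (Finset.mem_erase.2 ⟨Ne.symm hst, Finset.mem_univ t⟩) hmem
      rw [hsum, hsum] at this
      have hd := hdiag s
      linarith [neg_injective this]
  ext i
  obtain ⟨⟨s, t⟩, hst⟩ := i
  have := hoff s t
  unfold coordOf at this
  rw [dif_pos hst, dif_pos hst] at this
  exact this

/-- the mean log pseudo-likelihood `T ↦ g_θ(T)` is strictly concave on `Θ`. -/
theorem stmt3 (L : ℕ) (hL : 1 ≤ L) (θ : Theta L) :
    ∀ T T' : Theta L, T ≠ T' → ∀ lam : ℝ, 0 < lam → lam < 1 →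
      lam * gbar θ T + (1 - lam) * gbar θ T' < gbar θ (lam • T + (1 - lam) • T') := by
  intro T T' hne lam h0 h1
  obtain ⟨s, x0, hax⟩ : ∃ (s : Fin L) (x : BinVec L), aFun s x T ≠ aFun s x T' := by
    by_contra hc
    push_neg at hc
    exact hne (aFun_inj T T' hc)
  have heq : lam * gbar θ T + (1 - lam) * gbar θ T'
      = ∑ x : BinVec L, piA θ x * (lam * LPL x T + (1 - lam) * LPL x T') := by
    unfold gbar
    rw [Finset.mul_sum, Finset.mul_sum, ← Finset.sum_add_distrib]
    exact Finset.sum_congr rfl fun x _ => by ring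
  rw [heq]
  unfold gbar
  apply Finset.sum_lt_sum
  · intro x _
    exact mul_le_mul_of_nonneg_left (LPL_le x T T' lam h0 h1) (piA_pos θ x).le
  · exact ⟨x0, Finset.mem_univ x0,
      mul_lt_mul_of_pos_left (LPL_lt x0 T T' lam h0 h1 s hax) (piA_pos θ x0)⟩
end
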